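/- arXiv:2405.10407 — 3 statements merged into one kernel-verified Lean document; each statement's English description precedes it below -/
import Mathlib

section
/- Let p : Fin 9 → ℝ³ be nine points. Then there exist scalars λ : Fin 9 → ℝ such that ∑ λ i • p i = 0, ∑ λ i = 0, and at least three of the λ i are nonzero. -/
open scoped Classical

private lemma dep5 (q : Fin 5 → EuclideanSpace ℝ (Fin 3)) :
    ∃ w : Fin 5 → ℝ, (∑ i, w i • q i = 0) ∧ (∑ i, w i = 0) ∧
      ∃ i j, i ≠ j ∧ w i ≠ 0 ∧ w j ≠ 0 := by
  set Q : Fin 5 → ℝ × EuclideanSpace ℝ (Fin 3) := fun i => (1, q i) with hQ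
  have hni : ¬ LinearIndependent ℝ Q := by
    intro h
    have h1 := h.fintype_card_le_finrank
    rw [Module.finrank_prod, finrank_euclideanSpace_fin, Module.finrank_self] at h1
    simp at h1
  rw [Fintype.not_linearIndependent_iff] at hni
  obtain ⟨w, hw, i0, hi0⟩ := hni
  have h1 : ∑ i, w i = 0 := by
    have := congrArg Prod.fst hw
    simpa [hQ, Prod.fst_sum] using this
  have h2 : ∑ i, w i • q i = 0 := by
    have := congrArg Prod.snd hw
    simpa [hQ, Prod.snd_sum] using this
  refine ⟨w, h2, h1, ?_⟩
  by_contra hcon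
  push_neg at hcon
  have hall : ∀ j, j ≠ i0 → w j = 0 := by
    intro j hj
    by_contra hj0
    exact hi0 (hcon j i0 hj hj0)
  have : ∑ i, w i = w i0 := Finset.sum_eq_single i0 (fun j _ hj => hall j hj) (by simp)
  rw [h1] at this
  exact hi0 this.symm

private lemma card3 {s : Finset (Fin 9)} {a b c : Fin 9} (ha : a ∈ s) (hb : b ∈ s)
    (hc : c ∈ s) (hab : a ≠ b) (hac : a ≠ c) (hbc : b ≠ c) : 3 ≤ s.card := by
  have hsub : ({a, b, c} : Finset (Fin 9)) ⊆ s := by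
    intro x hx
    simp only [Finset.mem_insert, Finset.mem_singleton] at hx
    rcases hx with rfl | rfl | rfl <;> assumption
  have hcard : ({a, b, c} : Finset (Fin 9)).card = 3 := by
    rw [Finset.card_insert_of_notMem (by simp [hab, hac]),
      Finset.card_insert_of_notMem (by simp [hbc]), Finset.card_singleton]
  rw [← hcard]
  exact Finset.card_le_card hsub

private lemma key_sum {M : Type*} [AddCommMonoid M] [Module ℝ M]
    (e : Fin 5 → Fin 9) (w : Fin 5 → ℝ) (f : Fin 9 → M) :
    ∑ j, (∑ a, if e a = j then w a else 0) • f j = ∑ a, w a • f (e a) := by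
  have : ∀ j, (∑ a, if e a = j then w a else 0) • f j
      = ∑ a, if e a = j then w a • f j else 0 := by
    intro j
    rw [Finset.sum_smul]
    congr 1; funext a
    split <;> simp
  simp_rw [this]
  rw [Finset.sum_comm]
  congr 1; funext a
  simp [Finset.sum_ite_eq]

theorem stmt_10 (p : Fin 9 → EuclideanSpace ℝ (Fin 3)) :
    ∃ l : Fin 9 → ℝ,
      (∑ i, l i • p i = 0) ∧ (∑ i, l i = 0) ∧
      3 ≤ (Finset.univ.filter (fun i => l i ≠ 0)).card := by
  set e1 : Fin 5 → Fin 9 := fun a => ⟨a.val, by omega⟩ with he1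
  set e2 : Fin 5 → Fin 9 := fun a => ⟨a.val + 4, by omega⟩ with he2
  have he1inj : Function.Injective e1 := by
    intro a b h; rw [he1] at h; simp only [Fin.mk.injEq] at h; exact Fin.ext h
  have he2inj : Function.Injective e2 := by
    intro a b h; rw [he2] at h; simp only [Fin.mk.injEq] at h; exact Fin.ext (by omega)
  obtain ⟨w, hw1, hw2, i, j, hij, hwi, hwj⟩ := dep5 (fun a => p (e1 a))
  obtain ⟨v, hv1, hv2, k, m, hkm, hvk, hvm⟩ := dep5 (fun a => p (e2 a))
  set lam : Fin 9 → ℝ := fun t => ∑ a, if e1 a = t then w a else 0 with hlam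
  set mu : Fin 9 → ℝ := fun t => ∑ a, if e2 a = t then v a else 0 with hmu
  -- values
  have lam_apply : ∀ a, lam (e1 a) = w a := by
    intro a
    rw [hlam]
    simp only [he1inj.eq_iff]
    simpa only [Finset.mem_univ, if_true] using Finset.sum_ite_eq' Finset.univ a w
  have mu_apply : ∀ a, mu (e2 a) = v a := by
    intro a
    rw [hmu]
    simp only [he2inj.eq_iff]
    simpa only [Finset.mem_univ, if_true] using Finset.sum_ite_eq' Finset.univ a v
  have lam_zero : ∀ t : Fin 9, 5 ≤ t.val → lam t = 0 := by
    intro t ht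
    rw [hlam]
    apply Finset.sum_eq_zero
    intro a _
    rw [if_neg]
    intro h
    have : (e1 a).val = t.val := by rw [h]
    simp [he1] at this
    omega
  have mu_zero : ∀ t : Fin 9, t.val < 4 → mu t = 0 := by
    intro t ht
    rw [hmu]
    apply Finset.sum_eq_zero
    intro a _
    rw [if_neg]
    intro h
    have : (e2 a).val = t.val := by rw [h]
    simp [he2] at this
    omega
  -- choose scalar c
  set c : ℝ := if lam 4 + mu 4 = 0 then 2 else 1 with hc
  have hc0 : c ≠ 0 := by rw [hc]; split <;> norm_num
  set l : Fin 9 → ℝ := fun t => lam t + c * mu t with hl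
  have hsum1 : ∑ t, l t • p t = 0 := by
    have : ∀ t, l t • p t = lam t • p t + c • (mu t • p t) := by
      intro t
      rw [hl]
      simp [add_smul, mul_smul]
    simp_rw [this]
    rw [Finset.sum_add_distrib, ← Finset.smul_sum]
    rw [hlam, hmu]  -- maybe unneeded
    rw [key_sum, key_sum, hw1, hv1]
    simp
  have hsum2 : ∑ t, l t = 0 := by
    rw [hl]
    rw [Finset.sum_add_distrib, ← Finset.mul_sum]
    have e1s : ∑ t, lam t = ∑ a, w a := by
      have := key_sum e1 w (fun _ => (1:ℝ))
      simpa using this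
    have e2s : ∑ t, mu t = ∑ a, v a := by
      have := key_sum e2 v (fun _ => (1:ℝ))
      simpa using this
    rw [e1s, e2s, hw2, hv2]
    ring
  refine ⟨l, hsum1, hsum2, ?_⟩
  -- basic value computations
  have hval1 : ∀ a : Fin 5, (e1 a).val = a.val := by intro a; rw [he1]
  have hval2 : ∀ a : Fin 5, (e2 a).val = a.val + 4 := by intro a; rw [he2]
  have h14 : e1 4 = 4 := by rw [he1]; rfl
  have h20 : e2 0 = 4 := by rw [he2]; rfl
  have lam4 : lam 4 = w 4 := by rw [← h14, lam_apply]
  have mu4 : mu 4 = v 0 := by rw [← h20, mu_apply]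
  have lval : ∀ a : Fin 5, a.val ≠ 4 → l (e1 a) = w a := by
    intro a ha
    show lam (e1 a) + c * mu (e1 a) = w a
    rw [mu_zero (e1 a) (by rw [hval1]; omega), lam_apply]
    ring
  have rval : ∀ a : Fin 5, a ≠ 0 → l (e2 a) = c * v a := by
    intro a ha
    have ha' : a.val ≠ 0 := fun h => ha (Fin.ext h)
    show lam (e2 a) + c * mu (e2 a) = c * v a
    rw [lam_zero (e2 a) (by rw [hval2]; omega), mu_apply]
    ring
  have l4 : l 4 = w 4 + c * v 0 := by
    show lam 4 + c * mu 4 = w 4 + c * v 0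
    rw [lam4, mu4]
  by_cases hz : w 4 = 0 ∧ v 0 = 0
  · -- both middle coefficients vanish
    have hi4 : i ≠ 4 := fun h => hwi (h ▸ hz.1)
    have hj4 : j ≠ 4 := fun h => hwj (h ▸ hz.1)
    have hk0 : k ≠ 0 := fun h => hvk (h ▸ hz.2)
    have hi4' : i.val ≠ 4 := fun h => hi4 (Fin.ext h)
    have hj4' : j.val ≠ 4 := fun h => hj4 (Fin.ext h)
    have hk0' : k.val ≠ 0 := fun h => hk0 (Fin.ext h)
    apply card3 (a := e1 i) (b := e1 j) (c := e2 k)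
    · simp only [Finset.mem_filter, Finset.mem_univ, true_and]
      rw [lval i hi4']; exact hwi
    · simp only [Finset.mem_filter, Finset.mem_univ, true_and]
      rw [lval j hj4']; exact hwj
    · simp only [Finset.mem_filter, Finset.mem_univ, true_and]
      rw [rval k hk0]; exact mul_ne_zero hc0 hvk
    · exact fun h => hij (he1inj h)
    · intro h
      have := congrArg Fin.val h
      rw [hval1, hval2] at this
      omega
    · intro h
      have := congrArg Fin.val h
      rw [hval1, hval2] at this
      omega
  · -- at least one of w 4, v 0 is nonzero
    rw [not_and_or] at hz
    have hmid : l 4 ≠ 0 := by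
      rw [l4, hc]
      split
      · rename_i h0
        rw [lam4, mu4] at h0
        have hv0 : v 0 ≠ 0 := by
          intro hv
          rw [hv] at h0
          rcases hz with h | h
          · exact h (by linarith)
          · exact h hv
        intro h
        apply hv0
        linarith
      · rename_i h0
        rw [lam4, mu4] at h0
        simpa using h0
    obtain ⟨i', hi'4, hwi'⟩ : ∃ i' : Fin 5, i'.val ≠ 4 ∧ w i' ≠ 0 := by
      rcases eq_or_ne i 4 with h | h
      · refine ⟨j, fun hh => hij ?_, hwj⟩
        have h4v : ((4 : Fin 5) : ℕ) = 4 := rfl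
        apply Fin.ext
        rw [h, h4v, hh]
      · exact ⟨i, fun hh => h (Fin.ext hh), hwi⟩
    obtain ⟨k', hk'0, hvk'⟩ : ∃ k' : Fin 5, k' ≠ 0 ∧ v k' ≠ 0 := by
      rcases eq_or_ne k 0 with h | h
      · refine ⟨m, fun hh => hkm ?_, hvm⟩
        rw [h, hh]
      · exact ⟨k, h, hvk⟩
    have hk'0' : k'.val ≠ 0 := fun hh => hk'0 (Fin.ext hh)
    apply card3 (a := e1 i') (b := (4 : Fin 9)) (c := e2 k')
    · simp only [Finset.mem_filter, Finset.mem_univ, true_and]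
      rw [lval i' hi'4]; exact hwi'
    · simp only [Finset.mem_filter, Finset.mem_univ, true_and]
      exact hmid
    · simp only [Finset.mem_filter, Finset.mem_univ, true_and]
      rw [rval k' hk'0]; exact mul_ne_zero hc0 hvk'
    · intro h
      have := congrArg Fin.val h
      rw [hval1] at this
      have h9 : ((4 : Fin 9) : ℕ) = 4 := rfl
      rw [h9] at this
      exact hi'4 this
    · intro h
      have := congrArg Fin.val h
      rw [hval1, hval2] at this
      omega
    · intro h
      have := congrArg Fin.val h
      rw [hval2] at this
      have h9 : ((4 : Fin 9) : ℕ) = 4 := rfl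
      rw [h9] at this
      omega
end

section
/- Let n ≥ 2 and let T : ℝⁿ → ℝ^m be a linear map with n ≥ m + 3. Then there exists a nonzero x in the kernel of T with at least three nonzero coordinates. -/
open scoped Classical

theorem stmt_11 {n m : ℕ} (hn : 2 ≤ n) (h : n ≥ m + 3)
    (T : (Fin n → ℝ) →ₗ[ℝ] (Fin m → ℝ)) :
    ∃ x : Fin n → ℝ, x ≠ 0 ∧ T x = 0 ∧
      3 ≤ (Finset.univ.filter (fun i => x i ≠ 0)).card := by
  by_contra hc
  push_neg at hc
  -- every element of the kernel has at most 2 nonzero coords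
  have hsupp : ∀ x : Fin n → ℝ, T x = 0 →
      (Finset.univ.filter (fun i => x i ≠ 0)).card ≤ 2 := by
    intro x hx
    by_cases hx0 : x = 0
    · subst hx0; simp
    · have := hc x hx0 hx; omega
  -- kernel has dimension ≥ 3
  have hrk : 3 ≤ Module.finrank ℝ (LinearMap.ker T) := by
    have h1 := LinearMap.finrank_range_add_finrank_ker T
    have h2 : Module.finrank ℝ (LinearMap.range T) ≤ m := by
      simpa using Submodule.finrank_le (LinearMap.range T)
    simp [Module.finrank_pi] at h1
    omega
  -- the coordinate-plane subspaces of K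
  set p : Fin n × Fin n → Subspace ℝ (LinearMap.ker T) := fun ij =>
    { carrier := {v | ∀ k, k ≠ ij.1 → k ≠ ij.2 → (v : Fin n → ℝ) k = 0}
      add_mem' := by intro a b ha hb k h1 h2; simp [ha k h1 h2, hb k h1 h2]
      zero_mem' := by intro k _ _; simp
      smul_mem' := by intro c a ha k h1 h2; simp [ha k h1 h2] } with hp
  have hcov : ⋃ ij, (p ij : Set (LinearMap.ker T)) = Set.univ := by
    ext v
    simp only [Set.mem_iUnion, Set.mem_univ, iff_true]
    have hv := hsupp (v : Fin n → ℝ) v.2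
    obtain ⟨t, hst, htc⟩ := Finset.exists_superset_card_eq hv (by simpa using hn)
    obtain ⟨i, j, hij, rfl⟩ := Finset.card_eq_two.mp htc
    refine ⟨(i, j), fun k h1 h2 => ?_⟩
    by_contra hk
    have : k ∈ ({i, j} : Finset (Fin n)) := hst (by simp [hk])
    simp at this
    tauto
  obtain ⟨⟨i, j⟩, hij⟩ := Subspace.exists_eq_top_of_iUnion_eq_univ hcov
  -- then K embeds into ℝ²
  let g : LinearMap.ker T →ₗ[ℝ] (Fin 2 → ℝ) :=
    { toFun := fun v => ![(v : Fin n → ℝ) i, (v : Fin n → ℝ) j]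
      map_add' := by intro a b; funext k; fin_cases k <;> simp
      map_smul' := by intro c a; funext k; fin_cases k <;> simp }
  have hginj : Function.Injective g := by
    rw [injective_iff_map_eq_zero]
    intro v hv
    have hvmem : v ∈ p (i, j) := hij ▸ Submodule.mem_top
    have h0 : (g v) 0 = 0 := by rw [hv]; rfl
    have h1 : (g v) 1 = 0 := by rw [hv]; rfl
    simp only [g, LinearMap.coe_mk, AddHom.coe_mk, Matrix.cons_val_zero,
      Matrix.cons_val_one, Matrix.head_cons] at h0 h1
    ext k
    by_cases hki : k = i
    · simpa [hki] using h0
    · by_cases hkj : k = j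
      · simpa [hkj] using h1
      · exact hvmem k hki hkj
  have := LinearMap.finrank_le_finrank_of_injective hginj
  simp [Module.finrank_pi] at this
  omega
end

section
/- Let p : Fin 9 → ℝ³ and define F i j k = p i × p j + p j × p k + p k × p i for all i, j, k. Then the 9-particle 3-equilibrium problem for F has a nontrivial solution: there exist fully symmetric λ : Fin 9 → Fin 9 → Fin 9 → ℝ, not all zero on triples i < j < k, such that for all m < n, ∑_{i ∉ {m,n}} λ m n i • F m n i = 0. -/
open Matrix

private lemma sort3 {μ : Fin 9 → ℝ} {a b c : Fin 9} (hab : b ≠ a) (hca : c ≠ a) (hcb : c ≠ b)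
    (ha : μ a ≠ 0) (hb : μ b ≠ 0) (hc : μ c ≠ 0) :
    ∃ i j k : Fin 9, i < j ∧ j < k ∧ μ i * μ j * μ k ≠ 0 := by
  rcases lt_trichotomy a b with h1 | h1 | h1
  · rcases lt_trichotomy b c with h2 | h2 | h2
    · exact ⟨a, b, c, h1, h2, mul_ne_zero (mul_ne_zero ha hb) hc⟩
    · exact absurd h2.symm hcb
    · rcases lt_trichotomy a c with h3 | h3 | h3
      · exact ⟨a, c, b, h3, h2, mul_ne_zero (mul_ne_zero ha hc) hb⟩
      · exact absurd h3.symm hca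
      · exact ⟨c, a, b, h3, h1, mul_ne_zero (mul_ne_zero hc ha) hb⟩
  · exact absurd h1.symm hab
  · rcases lt_trichotomy a c with h2 | h2 | h2
    · exact ⟨b, a, c, h1, h2, mul_ne_zero (mul_ne_zero hb ha) hc⟩
    · exact absurd h2.symm hca
    · rcases lt_trichotomy b c with h3 | h3 | h3
      · exact ⟨b, c, a, h3, h2, mul_ne_zero (mul_ne_zero hb hc) ha⟩
      · exact absurd h3.symm hcb
      · exact ⟨c, b, a, h3, h1, mul_ne_zero (mul_ne_zero hc hb) ha⟩

theorem stmt_15 (p : Fin 9 → (Fin 3 → ℝ))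
    (F : Fin 9 → Fin 9 → Fin 9 → (Fin 3 → ℝ))
    (hF : ∀ i j kk, F i j kk =
      crossProduct (p i) (p j) + crossProduct (p j) (p kk) + crossProduct (p kk) (p i)) :
    ∃ l : Fin 9 → Fin 9 → Fin 9 → ℝ,
      (∀ i j kk, l i j kk = l j kk i) ∧
      (∀ i j kk, l i j kk = l j i kk) ∧
      (∃ i j kk, i < j ∧ j < kk ∧ l i j kk ≠ 0) ∧
      (∀ m n : Fin 9, m < n →
        ∑ i ∈ Finset.univ.filter (fun i => i ≠ m ∧ i ≠ n), l m n i • F m n i = 0) := by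
  classical
  set T : (Fin 9 → ℝ) →ₗ[ℝ] ℝ × (Fin 3 → ℝ) :=
    { toFun := fun μ => (∑ i, μ i, ∑ i, μ i • p i)
      map_add' := by
        intro x y
        simp [add_smul, Finset.sum_add_distrib, Prod.ext_iff]
      map_smul' := by
        intro c x
        simp [Finset.mul_sum, mul_smul, Finset.smul_sum, Prod.ext_iff] } with hTdef
  set K : Submodule ℝ (Fin 9 → ℝ) := LinearMap.ker T with hKdef
  have h5 : 5 ≤ Module.finrank ℝ K := by
    rw [hKdef]
    have h1 := LinearMap.finrank_range_add_finrank_ker T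
    have h2 : Module.finrank ℝ (LinearMap.range T) ≤ 4 := by
      have := Submodule.finrank_le (LinearMap.range T)
      simpa using this
    have h3 : Module.finrank ℝ (Fin 9 → ℝ) = 9 := by simp
    omega
  -- subspaces of K of elements supported on at most a pair of coordinates
  set Q : Fin 9 × Fin 9 → Subspace ℝ K := fun ij =>
    ⨅ k ∈ ({k : Fin 9 | k ≠ ij.1 ∧ k ≠ ij.2}), LinearMap.ker
      (LinearMap.comp (LinearMap.proj k) K.subtype) with hQdef
  have hQmem : ∀ ij (x : K), x ∈ Q ij ↔
      ∀ k, k ≠ ij.1 → k ≠ ij.2 → (x : Fin 9 → ℝ) k = 0 := by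
    intro ij x
    simp [hQdef, Submodule.mem_iInf, LinearMap.mem_ker, and_imp]
  have hnotcov : (⋃ ij : Fin 9 × Fin 9, (Q ij : Set K)) ≠ Set.univ := by
    intro hcov
    obtain ⟨ij, htop⟩ := Subspace.exists_eq_top_of_iUnion_eq_univ hcov
    set f : K →ₗ[ℝ] ℝ × ℝ :=
      { toFun := fun x => ((x : Fin 9 → ℝ) ij.1, (x : Fin 9 → ℝ) ij.2)
        map_add' := by intro x y; simp
        map_smul' := by intro c x; simp } with hfdef
    have hinj : Function.Injective f := by
      rw [← LinearMap.ker_eq_bot, eq_bot_iff]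
      intro x hx
      have hx' : f x = 0 := hx
      have h1 : (x : Fin 9 → ℝ) ij.1 = 0 := congrArg Prod.fst hx'
      have h2 : (x : Fin 9 → ℝ) ij.2 = 0 := congrArg Prod.snd hx'
      have hx2 : x ∈ Q ij := htop ▸ Submodule.mem_top
      rw [hQmem] at hx2
      simp only [Submodule.mem_bot]
      apply Subtype.ext
      funext k
      by_cases hk1 : k = ij.1
      · simpa [hk1] using h1
      · by_cases hk2 : k = ij.2
        · simpa [hk2] using h2
        · exact hx2 k hk1 hk2
    have hle := LinearMap.finrank_le_finrank_of_injective hinj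
    have h2 : Module.finrank ℝ (ℝ × ℝ) = 2 := by simp
    omega
  obtain ⟨x, hx⟩ := (Set.ne_univ_iff_exists_notMem _).mp hnotcov
  simp only [Set.mem_iUnion, not_exists] at hx
  have hget : ∀ i j : Fin 9, ∃ k, k ≠ i ∧ k ≠ j ∧ (x : Fin 9 → ℝ) k ≠ 0 := by
    intro i j
    have h := hx (i, j)
    simp only [SetLike.mem_coe] at h
    rw [hQmem] at h
    push_neg at h
    simpa using h
  set μ : Fin 9 → ℝ := (x : Fin 9 → ℝ) with hμdef
  have hmemK : μ ∈ K := x.2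
  have hTμ : T μ = 0 := hmemK
  have hsum : ∑ i, μ i = 0 := congrArg Prod.fst hTμ
  have hpsum : ∑ i, μ i • p i = 0 := congrArg Prod.snd hTμ
  obtain ⟨a, -, -, ha⟩ := hget 0 0
  obtain ⟨b, hba, -, hb⟩ := hget a a
  obtain ⟨c, hca, hcb, hc⟩ := hget a b
  refine ⟨fun i j k => μ i * μ j * μ k, fun i j k => by ring, fun i j k => by ring,
    sort3 hba hca hcb ha hb hc, ?_⟩
  intro m n hmn
  show ∑ i ∈ Finset.univ.filter (fun i => i ≠ m ∧ i ≠ n), (μ m * μ n * μ i) • F m n i = 0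
  have hFzero : ∀ i : Fin 9, i = m ∨ i = n → F m n i = 0 := by
    rintro i (rfl | rfl) <;>
      simp [hF, cross_self] 
  rw [Finset.sum_subset (Finset.filter_subset _ Finset.univ)
      (fun i _ hi => by
        have : i = m ∨ i = n := by
          by_contra h
          push_neg at h
          exact hi (Finset.mem_filter.mpr ⟨Finset.mem_univ i, h⟩)
        rw [hFzero i this, smul_zero])]
  have keylin : ∀ (g : (Fin 3 → ℝ) →ₗ[ℝ] (Fin 3 → ℝ)),
      ∑ i, (μ m * μ n * μ i) • g (p i) = 0 := by
    intro g
    have h1 : ∑ i, (μ m * μ n * μ i) • g (p i)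
        = g ((μ m * μ n) • ∑ i, μ i • p i) := by
      simp [map_sum, _root_.map_smul, Finset.smul_sum, smul_smul]
    rw [h1, hpsum, smul_zero, map_zero]
  have hexp : ∀ i : Fin 9, (μ m * μ n * μ i) • F m n i
      = (μ m * μ n * μ i) • crossProduct (p m) (p n)
        + (μ m * μ n * μ i) • (crossProduct (p n)) (p i)
        + (μ m * μ n * μ i) • ((LinearMap.flip crossProduct) (p m)) (p i) := by
    intro i
    rw [hF]
    simp only [smul_add]
    rfl
  simp only [hexp, Finset.sum_add_distrib]
  rw [keylin (crossProduct (p n)), keylin ((LinearMap.flip crossProduct) (p m))]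
  rw [← Finset.sum_smul, ← Finset.mul_sum, hsum, mul_zero, zero_smul]
  simp
end
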